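/- Let n ≥ 1, p ∈ (1, ∞), μ ∈ [0, 1] and Λ₀ > 0. Let A : ℝⁿ → ℝⁿ be continuous on ℝⁿ and differentiable at every ζ ∈ ℝⁿ with μ² + |ζ|² > 0, and assume the ellipticity condition ⟨DA(ζ) η, η⟩ ≥ Λ₀ · (μ² + |ζ|²)^{(p−2)/2} · |η|² for every such ζ and every η ∈ ℝⁿ, where DA(ζ) denotes the derivative (Jacobian) of A at ζ. Then there exists a constant Λ̃₀ > 0, depending only on Λ₀, n and p, such that for all ζ, η ∈ ℝⁿ with μ² + |ζ|² + |η|² > 0, ⟨A(ζ) − A(η), ζ − η⟩ ≥ Λ̃₀ · (μ² + |ζ|² + |η|²)^{(p−2)/2} · |ζ − η|². -/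

import Mathlib

open MeasureTheory Metric Set
open scoped RealInnerProductSpace

set_option maxHeartbeats 1000000 in
/-- **Monotonicity from ellipticity for `p`-Laplacian type operators.**
Let `p ∈ (1,∞)`, `μ ∈ [0,1]`, `Λ₀ > 0` and let `A : ℝⁿ → ℝⁿ` be continuous, differentiable
at every `ζ` with `μ² + |ζ|² > 0`, satisfying
`⟨DA(ζ) η, η⟩ ≥ Λ₀ (μ² + |ζ|²)^{(p−2)/2} |η|²`.  Then there is `Λ̃₀ = Λ̃₀(Λ₀, n, p) > 0`
with `⟨A(ζ) − A(η), ζ − η⟩ ≥ Λ̃₀ (μ² + |ζ|² + |η|²)^{(p−2)/2} |ζ − η|²` whenever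
`μ² + |ζ|² + |η|² > 0`. -/
theorem stmt15 (n : ℕ) (hn : 1 ≤ n) (p : ℝ) (hp : 1 < p) (Λ₀ : ℝ) (hΛ₀ : 0 < Λ₀) :
    ∃ c : ℝ, 0 < c ∧
      ∀ μ : ℝ, μ ∈ Set.Icc (0 : ℝ) 1 →
      ∀ A : EuclideanSpace ℝ (Fin n) → EuclideanSpace ℝ (Fin n),
        Continuous A →
        (∀ ζ : EuclideanSpace ℝ (Fin n), 0 < μ ^ 2 + ‖ζ‖ ^ 2 → DifferentiableAt ℝ A ζ) →
        (∀ ζ : EuclideanSpace ℝ (Fin n), 0 < μ ^ 2 + ‖ζ‖ ^ 2 →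
          ∀ η : EuclideanSpace ℝ (Fin n),
            Λ₀ * (μ ^ 2 + ‖ζ‖ ^ 2) ^ ((p - 2) / 2) * ‖η‖ ^ 2
              ≤ ⟪(fderiv ℝ A ζ) η, η⟫) →
        ∀ ζ η : EuclideanSpace ℝ (Fin n), 0 < μ ^ 2 + ‖ζ‖ ^ 2 + ‖η‖ ^ 2 →
          c * (μ ^ 2 + ‖ζ‖ ^ 2 + ‖η‖ ^ 2) ^ ((p - 2) / 2) * ‖ζ - η‖ ^ 2
            ≤ ⟪A ζ - A η, ζ - η⟫ := by
  set q : ℝ := (p - 2) / 2 with hqdef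
  refine ⟨Λ₀ * (8 : ℝ) ^ (-(|p - 2| / 2)) / 4, by positivity, ?_⟩
  intro μ hμ A hA hdiff hell ζ η hpos
  by_cases hu : ζ = η
  · simp [hu]
  have hu0 : ζ - η ≠ 0 := sub_ne_zero.mpr hu
  set u : EuclideanSpace ℝ (Fin n) := ζ - η with hudef
  set S : ℝ := μ ^ 2 + ‖ζ‖ ^ 2 + ‖η‖ ^ 2 with hSdef
  set γ : ℝ → EuclideanSpace ℝ (Fin n) := fun t => η + t • u with hγdef
  set g : ℝ → ℝ := fun t => ⟪A (γ t), u⟫ with hgdef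
  have hγd : ∀ t : ℝ, HasDerivAt γ u t := by
    intro t
    have h := ((hasDerivAt_id t).smul_const u).const_add η
    rw [one_smul] at h
    exact h
  have hγc : Continuous γ := by continuity
  have hgc : Continuous g := (hA.comp hγc).inner continuous_const
  have hgd : ∀ t : ℝ, 0 < μ ^ 2 + ‖γ t‖ ^ 2 →
      HasDerivAt g ⟪(fderiv ℝ A (γ t)) u, u⟫ t := by
    intro t ht
    have h1 : HasDerivAt (fun s => A (γ s)) ((fderiv ℝ A (γ t)) u) t :=
      (hdiff (γ t) ht).hasFDerivAt.comp_hasDerivAt t (hγd t)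
    have h2 := h1.inner ℝ (hasDerivAt_const t u)
    simpa using h2
  have hqu : 0 < ‖u‖ ^ 2 := pow_pos (norm_pos_iff.mpr hu0) 2
  have hell' : ∀ t : ℝ, 0 < μ ^ 2 + ‖γ t‖ ^ 2 →
      Λ₀ * (μ ^ 2 + ‖γ t‖ ^ 2) ^ q * ‖u‖ ^ 2 ≤ ⟪(fderiv ℝ A (γ t)) u, u⟫ :=
    fun t ht => hell (γ t) ht u
  -- monotonicity on intervals whose interior consists of good points
  have mono' : ∀ s t : ℝ, s ≤ t → (∀ x ∈ Set.Ioo s t, 0 < μ ^ 2 + ‖γ x‖ ^ 2) →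
      g s ≤ g t := by
    intro s t hst hgood
    have := monotoneOn_of_deriv_nonneg (convex_Icc s t) hgc.continuousOn
      (fun x hx => by
        rw [interior_Icc] at hx
        exact ((hgd x (hgood x hx)).differentiableAt).differentiableWithinAt)
      (fun x hx => by
        rw [interior_Icc] at hx
        have hx' := hgood x hx
        rw [(hgd x hx').deriv]
        refine le_trans ?_ (hell' x hx')
        positivity)
    exact this (Set.left_mem_Icc.mpr hst) (Set.right_mem_Icc.mpr hst) hst
  -- full monotonicity
  have mono : ∀ s t : ℝ, s ≤ t → g s ≤ g t := by
    intro s t hst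
    by_cases hbad : ∃ x ∈ Set.Ioo s t, ¬ 0 < μ ^ 2 + ‖γ x‖ ^ 2
    · obtain ⟨t₀, ht₀, ht₀bad⟩ := hbad
      push_neg at ht₀bad
      have hγ0 : γ t₀ = 0 := by
        have : ‖γ t₀‖ = 0 := by nlinarith [norm_nonneg (γ t₀), sq_nonneg μ, sq_nonneg ‖γ t₀‖]
        exact norm_eq_zero.mp this
      have hother : ∀ x : ℝ, x ≠ t₀ → 0 < μ ^ 2 + ‖γ x‖ ^ 2 := by
        intro x hx
        by_contra hc
        push_neg at hc
        have hγx : γ x = 0 := by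
          have : ‖γ x‖ = 0 := by nlinarith [norm_nonneg (γ x), sq_nonneg μ, sq_nonneg ‖γ x‖]
          exact norm_eq_zero.mp this
        have heq : x • u = t₀ • u := by
          have h3 : η + x • u = η + t₀ • u := hγx.trans hγ0.symm
          exact add_left_cancel h3
        have : (x - t₀) • u = 0 := by rw [sub_smul, heq, sub_self]
        rcases smul_eq_zero.mp this with h | h
        · exact hx (sub_eq_zero.mp h)
        · exact hu0 h
      have h1 : g s ≤ g t₀ := mono' s t₀ (le_of_lt ht₀.1)
        (fun x hx => hother x (ne_of_lt hx.2))
      have h2 : g t₀ ≤ g t := mono' t₀ t (le_of_lt ht₀.2)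
        (fun x hx => hother x (ne_of_gt hx.1))
      linarith
    · push_neg at hbad
      exact mono' s t hst hbad
  set L : ℝ := Λ₀ * (8 : ℝ) ^ (-(|p - 2| / 2)) * S ^ q * ‖u‖ ^ 2 with hLdef
  have hSpos : (0 : ℝ) < S := hpos
  -- key pointwise bound
  have key : ∀ x : ℝ, S / 8 ≤ μ ^ 2 + ‖γ x‖ ^ 2 → μ ^ 2 + ‖γ x‖ ^ 2 ≤ S →
      L ≤ ⟪(fderiv ℝ A (γ x)) u, u⟫ := by
    intro x hlow hhigh
    have hS8 : (0:ℝ) < S / 8 := by linarith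
    have hxpos : 0 < μ ^ 2 + ‖γ x‖ ^ 2 := lt_of_lt_of_le hS8 hlow
    refine le_trans ?_ (hell' x hxpos)
    have hrpow : (8 : ℝ) ^ (-(|p - 2| / 2)) * S ^ q ≤ (μ ^ 2 + ‖γ x‖ ^ 2) ^ q := by
      rcases le_or_gt 0 q with hq0 | hq0
      · have hp2 : (0:ℝ) ≤ p - 2 := by
          have : 0 ≤ (p - 2) / 2 := hq0
          linarith
        have habs : -(|p - 2| / 2) = -q := by rw [abs_of_nonneg hp2]
        rw [habs]
        have h1 : (S / 8) ^ q ≤ (μ ^ 2 + ‖γ x‖ ^ 2) ^ q :=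
          Real.rpow_le_rpow (le_of_lt hS8) hlow hq0
        rw [Real.div_rpow (le_of_lt hSpos) (by norm_num : (0:ℝ) ≤ 8), div_eq_mul_inv,
          ← Real.rpow_neg (by norm_num : (0:ℝ) ≤ 8)] at h1
        linarith [h1, mul_comm ((8:ℝ) ^ (-q)) (S ^ q)]
      · have hp2 : p - 2 < 0 := by
          have : (p - 2) / 2 < 0 := hq0
          linarith
        have habs : -(|p - 2| / 2) = q := by
          rw [abs_of_neg hp2]; rw [hqdef]; ring
        rw [habs]
        have h1 : (μ ^ 2 + ‖γ x‖ ^ 2) ^ q ≥ S ^ q :=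
          Real.rpow_le_rpow_of_nonpos hxpos hhigh (le_of_lt hq0)
        have h2 : (8 : ℝ) ^ q ≤ 1 :=
          Real.rpow_le_one_of_one_le_of_nonpos (by norm_num) (le_of_lt hq0)
        have h3 : 0 < S ^ q := Real.rpow_pos_of_pos hSpos q
        nlinarith
    calc L = Λ₀ * ((8 : ℝ) ^ (-(|p - 2| / 2)) * S ^ q) * ‖u‖ ^ 2 := by ring
      _ ≤ Λ₀ * (μ ^ 2 + ‖γ x‖ ^ 2) ^ q * ‖u‖ ^ 2 :=
          mul_le_mul_of_nonneg_right (mul_le_mul_of_nonneg_left hrpow (le_of_lt hΛ₀))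
            (le_of_lt hqu)
  -- choose the good subinterval
  obtain ⟨a, b, ha0, hb1, hba, hgoodab⟩ :
      ∃ a b : ℝ, 0 ≤ a ∧ b ≤ 1 ∧ b - a = 1/4 ∧
        ∀ t ∈ Set.Icc a b, S / 8 ≤ μ ^ 2 + ‖γ t‖ ^ 2 ∧ μ ^ 2 + ‖γ t‖ ^ 2 ≤ S := by
    have hnu : ‖u‖ ≤ ‖ζ‖ + ‖η‖ := norm_sub_le ζ η
    have hupper : ∀ t : ℝ, 0 ≤ t → t ≤ 1 → μ ^ 2 + ‖γ t‖ ^ 2 ≤ S := by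
      intro t ht0 ht1
      have hγt : γ t = (1 - t) • η + t • ζ := by
        simp only [hγdef, hudef]
        module
      have h1 : ‖γ t‖ ≤ (1 - t) * ‖η‖ + t * ‖ζ‖ := by
        rw [hγt]
        calc ‖(1 - t) • η + t • ζ‖ ≤ ‖(1 - t) • η‖ + ‖t • ζ‖ := norm_add_le _ _
          _ = (1 - t) * ‖η‖ + t * ‖ζ‖ := by
              rw [norm_smul, norm_smul, Real.norm_eq_abs, Real.norm_eq_abs,
                abs_of_nonneg (by linarith), abs_of_nonneg ht0]
      have hη := norm_nonneg η
      have hζ := norm_nonneg ζ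
      have hγt0 := norm_nonneg (γ t)
      nlinarith [h1, mul_nonneg (mul_nonneg ht0 (sub_nonneg.mpr ht1)) (sq_nonneg (‖η‖ - ‖ζ‖)),
        mul_nonneg ht0 (sq_nonneg ‖ζ‖), mul_nonneg (sub_nonneg.mpr ht1) (sq_nonneg ‖η‖),
        mul_nonneg hγt0 hη, mul_nonneg hγt0 hζ, sq_nonneg (‖γ t‖ - (1 - t) * ‖η‖ - t * ‖ζ‖)]
    rcases le_total ‖η‖ ‖ζ‖ with hle | hle
    · refine ⟨3/4, 1, by norm_num, le_refl 1, by norm_num, ?_⟩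
      intro t ht
      refine ⟨?_, hupper t (by linarith [ht.1]) ht.2⟩
      have hζeq : ζ = γ t + (1 - t) • u := by
        simp only [hγdef, hudef]
        module
      have h1 : ‖ζ‖ ≤ ‖γ t‖ + (1 - t) * ‖u‖ := by
        rw [hζeq]
        calc ‖γ t + (1 - t) • u‖ ≤ ‖γ t‖ + ‖(1 - t) • u‖ := norm_add_le _ _
          _ = ‖γ t‖ + (1 - t) * ‖u‖ := by
              rw [norm_smul, Real.norm_eq_abs, abs_of_nonneg (by linarith [ht.2])]
      have h2 : (1 - t) * ‖u‖ ≤ (1/4) * (‖ζ‖ + ‖η‖) := by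
        have := norm_nonneg u
        nlinarith [ht.1, ht.2]
      have h3 : ‖ζ‖ / 2 ≤ ‖γ t‖ := by nlinarith
      have h4 : ‖ζ‖ ^ 2 / 4 ≤ ‖γ t‖ ^ 2 := by nlinarith [h3, norm_nonneg ζ, norm_nonneg (γ t)]
      have h5 : ‖η‖ ^ 2 ≤ ‖ζ‖ ^ 2 := by nlinarith [hle, norm_nonneg η, norm_nonneg ζ]
      linarith [h4, h5, sq_nonneg μ, hSdef.le, hSdef.ge]
    · refine ⟨0, 1/4, le_refl 0, by norm_num, by norm_num, ?_⟩
      intro t ht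
      refine ⟨?_, hupper t ht.1 (by linarith [ht.2])⟩
      have hηeq : η = γ t + (-t) • u := by
        simp only [hγdef, hudef]
        module
      have h1 : ‖η‖ ≤ ‖γ t‖ + t * ‖u‖ := by
        rw [hηeq]
        calc ‖γ t + (-t) • u‖ ≤ ‖γ t‖ + ‖(-t) • u‖ := norm_add_le _ _
          _ = ‖γ t‖ + t * ‖u‖ := by
              rw [norm_smul, Real.norm_eq_abs, abs_of_nonpos (by linarith [ht.1]), neg_neg]
      have h2 : t * ‖u‖ ≤ (1/4) * (‖ζ‖ + ‖η‖) := by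
        have := norm_nonneg u
        nlinarith [ht.1, ht.2]
      have h3 : ‖η‖ / 2 ≤ ‖γ t‖ := by nlinarith
      have h4 : ‖η‖ ^ 2 / 4 ≤ ‖γ t‖ ^ 2 := by nlinarith [h3, norm_nonneg η, norm_nonneg (γ t)]
      have h5 : ‖ζ‖ ^ 2 ≤ ‖η‖ ^ 2 := by nlinarith [hle, norm_nonneg η, norm_nonneg ζ]
      linarith [h4, h5, sq_nonneg μ, hSdef.le, hSdef.ge]
  -- quantitative bound on [a,b]
  have hab : a ≤ b := by linarith
  have quant : L * (b - a) ≤ g b - g a := by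
    have := Convex.mul_sub_le_image_sub_of_le_deriv (convex_Icc a b) hgc.continuousOn
      (fun x hx => by
        rw [interior_Icc] at hx
        have hx' := hgoodab x ⟨le_of_lt hx.1, le_of_lt hx.2⟩
        exact ((hgd x (lt_of_lt_of_le (by linarith) hx'.1)).differentiableAt).differentiableWithinAt)
      (fun x hx => by
        rw [interior_Icc] at hx
        have hx' := hgoodab x ⟨le_of_lt hx.1, le_of_lt hx.2⟩
        have hxpos : 0 < μ ^ 2 + ‖γ x‖ ^ 2 := lt_of_lt_of_le (by linarith) hx'.1
        rw [(hgd x hxpos).deriv]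
        exact key x hx'.1 hx'.2)
      a (Set.left_mem_Icc.mpr hab) b (Set.right_mem_Icc.mpr hab) hab
    linarith
  -- put everything together
  have hg1 : g 1 = ⟪A ζ, u⟫ := by
    simp only [hgdef, hγdef, one_smul, hudef]
    norm_num
  have hg0 : g 0 = ⟪A η, u⟫ := by
    simp only [hgdef, hγdef, zero_smul, add_zero]
  have h01 : ⟪A ζ - A η, u⟫ = g 1 - g 0 := by
    rw [hg1, hg0, inner_sub_left]
  have hm1 : g 0 ≤ g a := mono 0 a ha0
  have hm2 : g b ≤ g 1 := mono b 1 hb1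
  have hL4 : L / 4 ≤ g 1 - g 0 := by
    rw [hba] at quant
    linarith
  calc Λ₀ * (8 : ℝ) ^ (-(|p - 2| / 2)) / 4 * S ^ q * ‖u‖ ^ 2 = L / 4 := by
        rw [hLdef]; ring
    _ ≤ g 1 - g 0 := hL4
    _ = ⟪A ζ - A η, u⟫ := h01.symm
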